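/- Let u be an infinite word over a finite alphabet admitting an S-adic representation u = lim σ_0σ_1⋯σ_{n-1}(a_n) with a weakly primitive directive sequence (σ_n), i.e., for each n there exists r such that the substitution σ_n σ_{n+1} ⋯ σ_{n+r} maps every letter to a word containing every letter. Then u is uniformly recurrent: every factor of u occurs infinitely often with bounded gaps. -/

import Mathlib

open Filter Topology

/-- The factor of the infinite word `u` of length `n` starting at position `k`. -/
def factorAt {A : Type*} (u : ℕ → A) (k n : ℕ) : List A :=
  (List.range n).map (fun j => u (k + j))

/-- `w` is a factor of the infinite word `u`. -/
def IsFactor {A : Type*} (u : ℕ → A) (w : List A) : Prop :=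
  ∃ k, w = factorAt u k w.length

/-- The composition `σ_0 σ_1 ⋯ σ_{n-1} : A_n^* → A_0^*` of the first `n` substitutions of a
directive sequence over the alphabets `A_n = Fin (d n)`. -/
def compSubV (d : ℕ → ℕ) (σ : ∀ n, Fin (d (n + 1)) → List (Fin (d n))) :
    ∀ n, List (Fin (d n)) → List (Fin (d 0))
  | 0 => id
  | n + 1 => fun w => compSubV d σ n (w.flatMap (σ n))

/-- The composition `σ_n σ_{n+1} ⋯ σ_{n+k-1} : A_{n+k}^* → A_n^*`. -/
def segComp (d : ℕ → ℕ) (σ : ∀ n, Fin (d (n + 1)) → List (Fin (d n))) (n : ℕ) :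
    ∀ k, List (Fin (d (n + k))) → List (Fin (d n))
  | 0 => id
  | k + 1 => fun w => segComp d σ n k (w.flatMap (σ (n + k)))

section Aux

variable {d : ℕ → ℕ} {σ : ∀ n, Fin (d (n + 1)) → List (Fin (d n))}

lemma compSubV_append (n : ℕ) : ∀ x y : List (Fin (d n)),
    compSubV d σ n (x ++ y) = compSubV d σ n x ++ compSubV d σ n y := by
  induction n with
  | zero => intro x y; rfl
  | succ n ih =>
    intro x y
    show compSubV d σ n ((x ++ y).flatMap (σ n)) = _
    rw [List.flatMap_append, ih]
    rfl

lemma compSubV_nil (n : ℕ) : compSubV d σ n ([] : List (Fin (d n))) = [] := by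
  induction n with
  | zero => rfl
  | succ n ih => exact ih

lemma compSubV_flatten (n : ℕ) (v : List (Fin (d n))) :
    compSubV d σ n v = (v.map fun c => compSubV d σ n [c]).flatten := by
  induction v with
  | nil => simp [compSubV_nil]
  | cons c tl ih =>
    have h : c :: tl = [c] ++ tl := rfl
    rw [h, compSubV_append, ih]
    simp

lemma compSubV_infix {n : ℕ} {x y : List (Fin (d n))} (h : x <:+: y) :
    compSubV d σ n x <:+: compSubV d σ n y := by
  obtain ⟨s, t, rfl⟩ := h
  exact ⟨compSubV d σ n s, compSubV d σ n t, by rw [compSubV_append, compSubV_append]⟩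

lemma compSubV_ne_nil (hne : ∀ n b, σ n b ≠ []) :
    ∀ n, ∀ w : List (Fin (d n)), w ≠ [] → compSubV d σ n w ≠ [] := by
  intro n
  induction n with
  | zero => intro w hw; exact hw
  | succ n ih =>
    intro w hw
    apply ih
    match w with
    | c :: t =>
      simp only [List.flatMap_cons, ne_eq, List.append_eq_nil_iff]
      intro h
      exact hne n c h.1

lemma segComp_spec (n : ℕ) : ∀ (k : ℕ) (w : List (Fin (d (n + k)))),
    compSubV d σ (n + k) w = compSubV d σ n (segComp d σ n k w) := by
  intro k
  induction k with
  | zero => intro w; rfl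
  | succ k ih => intro w; exact ih (w.flatMap (σ (n + k)))

lemma factorAt_drop {A : Type*} (u : ℕ → A) (k K : ℕ) :
    factorAt u k K = (factorAt u 0 (k + K)).drop k := by
  apply List.ext_getElem
  · simp [factorAt]
  · intro i h1 h2
    simp [factorAt]

lemma take_window {α : Type*} (s t r : List α) (n : ℕ) (h : s.length + t.length ≤ n) :
    t <:+: (s ++ (t ++ r)).take n := by
  have h1 : (s ++ (t ++ r)).take n = s ++ (t ++ r.take (n - s.length - t.length)) := by
    rw [List.take_append, List.take_of_length_le (show s.length ≤ n by omega),
      List.take_append,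
      List.take_of_length_le (show t.length ≤ n - s.length by omega)]
  rw [h1]
  exact ⟨s, r.take (n - s.length - t.length), by rw [List.append_assoc]⟩

lemma window_flatten {α : Type*} (w : List α) (B : ℕ) (hB1 : 1 ≤ B) :
    ∀ (L : List (List α)), (∀ b ∈ L, w <:+: b ∧ b.length ≤ B) →
    ∀ p, p + 2 * B ≤ L.flatten.length → w <:+: (L.flatten.drop p).take (2 * B) := by
  intro L
  induction L with
  | nil => intro _ p hp; simp at hp; omega
  | cons b rest ih =>
    intro hB p hp
    rcases le_or_gt b.length p with hpb | hpb
    · rw [List.flatten_cons, List.drop_append, List.drop_eq_nil_of_le hpb,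
        List.nil_append]
      apply ih (fun b hb => hB b (List.mem_cons_of_mem _ hb)) (p - b.length)
      simp only [List.flatten_cons, List.length_append] at hp
      omega
    · match rest with
      | [] =>
        exfalso
        have hb := (hB b List.mem_cons_self).2
        simp at hp
        omega
      | b' :: rest' =>
        have h1 : (b :: b' :: rest').flatten = b ++ (b' ++ rest'.flatten) := by simp
        rw [h1, List.drop_append, Nat.sub_eq_zero_of_le (le_of_lt hpb),
          List.drop_zero]
        have hb' := hB b' (by simp)
        refine hb'.1.trans ?_
        apply take_window
        have hb := (hB b (by simp)).2
        have := hb'.2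
        simp only [List.length_drop]
        omega

end Aux

/-- If the infinite word `u` admits an `S`-adic representation
`u = lim σ_0 ⋯ σ_{n-1}(a_n)` with a weakly primitive directive sequence (for each `n` some
composition `σ_n ⋯ σ_{n+r}` is positive), then `u` is uniformly recurrent: every factor
occurs in every window of some fixed length `K`. -/
theorem weakly_primitive_implies_uniformly_recurrent
    (d : ℕ → ℕ) (σ : ∀ n, Fin (d (n + 1)) → List (Fin (d n)))
    (hne : ∀ n b, σ n b ≠ [])
    (a : ∀ n, Fin (d n)) (u : ℕ → Fin (d 0))
    (hlim : ∀ m : ℕ, ∀ᶠ n in atTop,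
      m ≤ (compSubV d σ n [a n]).length ∧
      (compSubV d σ n [a n]).take m = factorAt u 0 m)
    (hprim : ∀ n : ℕ, ∃ r : ℕ, ∀ (i : Fin (d n)) (j : Fin (d (n + (r + 1)))),
      i ∈ segComp d σ n (r + 1) [j]) :
    ∀ w : List (Fin (d 0)), IsFactor u w → ∃ K : ℕ, ∀ k : ℕ, w <:+: factorAt u k K := by
  intro w hw
  by_cases hw0 : w = []
  · exact ⟨0, fun k => by simp [hw0]⟩
  obtain ⟨k0, hk0⟩ := hw
  -- Step A: w is an infix of some compSubV d σ N [a N]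
  obtain ⟨N, hN⟩ := (hlim (k0 + w.length)).exists
  have hwV : w <:+: compSubV d σ N [a N] := by
    have h1 : w = ((compSubV d σ N [a N]).drop k0).take (k0 + w.length - k0) := by
      rw [← List.drop_take, hN.2, ← factorAt_drop, ← hk0]
    rw [h1]
    exact ((List.take_prefix _ _).isInfix).trans ((List.drop_suffix _ _).isInfix)
  obtain ⟨r, hr⟩ := hprim N
  -- Step B: w is an infix of every compSubV d σ (N+(r+1)) [j]
  have hwM : ∀ j : Fin (d (N + (r + 1))), w <:+: compSubV d σ (N + (r + 1)) [j] := by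
    intro j
    have h2 : [a N] <:+: segComp d σ N (r + 1) [j] := by
      obtain ⟨s, t, h⟩ := List.mem_iff_append.mp (hr (a N) j)
      rw [h]
      exact ⟨s, t, by simp⟩
    have h3 := compSubV_infix (σ := σ) h2
    rw [← segComp_spec] at h3
    exact hwV.trans h3
  -- Step C: the bound B
  set B := Finset.univ.sup (fun j : Fin (d (N + (r + 1))) => (compSubV d σ (N + (r + 1)) [j]).length)
    with hBdef
  have hBj : ∀ j : Fin (d (N + (r + 1))), (compSubV d σ (N + (r + 1)) [j]).length ≤ B := by
    intro j
    rw [hBdef]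
    exact Finset.le_sup
      (f := fun j : Fin (d (N + (r + 1))) => (compSubV d σ (N + (r + 1)) [j]).length)
      (Finset.mem_univ j)
  have hB1 : 1 ≤ B := by
    refine le_trans ?_ (hBj (a (N + (r + 1))))
    have := compSubV_ne_nil (σ := σ) hne (N + (r + 1)) [a (N + (r + 1))] (by simp)
    exact Nat.one_le_iff_ne_zero.mpr (by simpa [List.length_eq_zero_iff] using this)
  refine ⟨2 * B, fun k => ?_⟩
  obtain ⟨n, hn⟩ := ((hlim (k + 2 * B)).and (eventually_ge_atTop (N + (r + 1)))).exists
  obtain ⟨s, rfl⟩ := Nat.exists_eq_add_of_le hn.2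
  have hVdec : compSubV d σ (N + (r + 1) + s) [a (N + (r + 1) + s)] =
      ((segComp d σ (N + (r + 1)) s [a (N + (r + 1) + s)]).map
        (fun c => compSubV d σ (N + (r + 1)) [c])).flatten := by
    rw [segComp_spec, compSubV_flatten]
  have hfac : factorAt u k (2 * B) =
      ((compSubV d σ (N + (r + 1) + s) [a (N + (r + 1) + s)]).drop k).take (2 * B) := by
    rw [factorAt_drop, ← hn.1.2, List.drop_take]
    congr 1
    omega
  rw [hfac, hVdec]
  apply window_flatten w B hB1
  · intro b hb
    obtain ⟨c, _, rfl⟩ := List.mem_map.mp hb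
    exact ⟨hwM c, hBj c⟩
  · rw [← hVdec]
    exact hn.1.1
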